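/- Suppose X is a symmetric positive definite n×n real matrix, ε > 0, and 𝒜 ∈ ℝ^{n×n}, ℬ ∈ ℝ^{n×m}, 𝒞 ∈ ℝ^{m×n}, 𝒟 ∈ ℝ^{m×m} satisfy the dissipation matrix inequality: for all x ∈ ℝⁿ, u ∈ ℝᵐ, (𝒜x + ℬu)ᵀX(𝒜x + ℬu) - xᵀXx + 2uᵀ(𝒞x + 𝒟u) + ε‖x‖² ≤ 0. If sequences x : ℕ → ℝⁿ, q : ℕ → ℝᵐ satisfy x_{t+1} = 𝒜x_t + ℬq_t and the passivity condition ∑_{t=0}^{T-1} q_tᵀ(𝒞x_t + 𝒟q_t) ≥ 0 for all T ≥ 1, then with k₋, k₊ the smallest and largest eigenvalues of X, k₋‖x_T‖² + ε∑_{t=0}^{T-1}‖x_t‖² ≤ k₊‖x_0‖² holds for all T ≥ 1; in particular ‖x_T‖ ≤ √(k₊/k₋)·‖x_0‖ and x_t → 0 as t → ∞. -/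

import Mathlib

open scoped Matrix

theorem dissipation_implies_stability
    (n m : ℕ) (ε : ℝ) (hε : 0 < ε)
    (X : Matrix (Fin n) (Fin n) ℝ) (hX : X.PosDef)
    (𝒜 : Matrix (Fin n) (Fin n) ℝ) (ℬ : Matrix (Fin n) (Fin m) ℝ)
    (𝒞 : Matrix (Fin m) (Fin n) ℝ) (𝒟 : Matrix (Fin m) (Fin m) ℝ)
    (km kp : ℝ) (hkm : 0 < km)
    (hkmX : ∀ v : Fin n → ℝ, km * (v ⬝ᵥ v) ≤ v ⬝ᵥ (X *ᵥ v))
    (hkpX : ∀ v : Fin n → ℝ, v ⬝ᵥ (X *ᵥ v) ≤ kp * (v ⬝ᵥ v))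
    (hdis : ∀ (v : Fin n → ℝ) (u : Fin m → ℝ),
      (𝒜 *ᵥ v + ℬ *ᵥ u) ⬝ᵥ (X *ᵥ (𝒜 *ᵥ v + ℬ *ᵥ u)) - v ⬝ᵥ (X *ᵥ v) +
        2 * (u ⬝ᵥ (𝒞 *ᵥ v + 𝒟 *ᵥ u)) + ε * (v ⬝ᵥ v) ≤ 0)
    (x : ℕ → Fin n → ℝ) (q : ℕ → Fin m → ℝ)
    (hdyn : ∀ t, x (t + 1) = 𝒜 *ᵥ x t + ℬ *ᵥ q t)
    (hpass : ∀ T : ℕ, 1 ≤ T →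
      0 ≤ ∑ t ∈ Finset.range T, q t ⬝ᵥ (𝒞 *ᵥ x t + 𝒟 *ᵥ q t)) :
    (∀ T : ℕ, 1 ≤ T →
      km * (x T ⬝ᵥ x T) + ε * ∑ t ∈ Finset.range T, x t ⬝ᵥ x t ≤
        kp * (x 0 ⬝ᵥ x 0)) ∧
    (∀ T : ℕ, 1 ≤ T →
      Real.sqrt (x T ⬝ᵥ x T) ≤ Real.sqrt (kp / km) * Real.sqrt (x 0 ⬝ᵥ x 0)) ∧
    Filter.Tendsto x Filter.atTop (nhds 0) := by
  set V : ℕ → ℝ := fun t => x t ⬝ᵥ (X *ᵥ x t) with hV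
  set s : ℕ → ℝ := fun t => q t ⬝ᵥ (𝒞 *ᵥ x t + 𝒟 *ᵥ q t) with hs
  set a : ℕ → ℝ := fun t => x t ⬝ᵥ x t with ha
  have a_nonneg : ∀ t, 0 ≤ a t := by
    intro t
    simp only [ha, dotProduct]
    exact Finset.sum_nonneg fun i _ => mul_self_nonneg _
  have hstep : ∀ t, V (t + 1) - V t + 2 * s t + ε * a t ≤ 0 := by
    intro t
    have h := hdis (x t) (q t)
    rw [← hdyn t] at h
    exact h
  have hsum : ∀ T : ℕ,
      V T + 2 * ∑ t ∈ Finset.range T, s t + ε * ∑ t ∈ Finset.range T, a t ≤ V 0 := by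
    intro T
    induction T with
    | zero => simp
    | succ T ih =>
      rw [Finset.sum_range_succ, Finset.sum_range_succ]
      have := hstep T
      nlinarith [this, ih]
  have main1 : ∀ T : ℕ, 1 ≤ T →
      km * a T + ε * ∑ t ∈ Finset.range T, a t ≤ kp * a 0 := by
    intro T hT
    have h1 := hkmX (x T)
    have h2 := hkpX (x 0)
    have h3 := hpass T hT
    have h4 := hsum T
    simp only [hV, hs, ha] at *
    linarith
  have sum_nonneg' : ∀ T : ℕ, 0 ≤ ∑ t ∈ Finset.range T, a t := fun T =>
    Finset.sum_nonneg fun t _ => a_nonneg t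
  have kpa0_nonneg : 0 ≤ kp * a 0 := by
    have := main1 1 le_rfl
    nlinarith [a_nonneg 1, sum_nonneg' 1, mul_nonneg hkm.le (a_nonneg 1),
      mul_nonneg hε.le (sum_nonneg' 1)]
  refine ⟨main1, ?_, ?_⟩
  · intro T hT
    have h := main1 T hT
    have haT : a T ≤ (kp / km) * a 0 := by
      rw [div_mul_eq_mul_div, le_div_iff₀ hkm]
      nlinarith [mul_nonneg hε.le (sum_nonneg' T)]
    calc Real.sqrt (a T) ≤ Real.sqrt ((kp / km) * a 0) := Real.sqrt_le_sqrt haT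
      _ = Real.sqrt (kp / km) * Real.sqrt (a 0) := Real.sqrt_mul' _ (a_nonneg 0)
  · have hbound : ∀ T : ℕ, ∑ t ∈ Finset.range T, a t ≤ kp * a 0 / ε := by
      intro T
      rcases Nat.eq_zero_or_pos T with h | h
      · subst h; simp; positivity
      · have := main1 T h
        rw [le_div_iff₀ hε]
        nlinarith [mul_nonneg hkm.le (a_nonneg T)]
    have hsummable : Summable a :=
      summable_of_sum_range_le a_nonneg hbound
    have ha0 : Filter.Tendsto a Filter.atTop (nhds 0) :=
      hsummable.tendsto_atTop_zero
    have hsqrt : Filter.Tendsto (fun t => Real.sqrt (a t)) Filter.atTop (nhds 0) := by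
      have := (Real.continuous_sqrt.tendsto 0).comp ha0
      simpa [Function.comp_def] using this
    rw [tendsto_pi_nhds]
    intro i
    refine squeeze_zero_norm ?_ hsqrt
    intro t
    have h1 : x t i * x t i ≤ a t := by
      simp only [ha, dotProduct]
      exact Finset.single_le_sum (fun j _ => mul_self_nonneg (x t j)) (Finset.mem_univ i)
    have : |x t i| = Real.sqrt (x t i * x t i) := by
      rw [Real.sqrt_mul_self_eq_abs]
    simp only [Real.norm_eq_abs, this]
    exact Real.sqrt_le_sqrt h1
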